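/- For all real parameters λ > 0 with λ ≠ 1 and φ > 0, and every y > 0, the derivative at y of the SMPtW density f vanishes if and only if φ − 1 = φ · y^φ · ((log λ)·exp(−y^φ) + 1). -/

import Mathlib

open Real

/-- The SMPtW probability density function with parameters `lam > 0`, `lam ≠ 1`, `phi > 0`. -/
noncomputable def smptwPDF (lam phi y : ℝ) : ℝ :=
  (Real.log lam * phi * y ^ (phi - 1) *
    Real.exp (Real.log lam * Real.exp (-(y ^ phi)) - y ^ phi)) / (lam - 1)

/-- the derivative of the SMPtW density vanishes at `y > 0` iff
`φ − 1 = φ y^φ ((log λ) e^(−y^φ) + 1)`. -/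
theorem smptw_mode_equation (lam phi : ℝ)
    (hlam : 0 < lam) (hlam1 : lam ≠ 1) (hphi : 0 < phi)
    (y : ℝ) (hy : 0 < y) :
    deriv (smptwPDF lam phi) y = 0 ↔
      phi - 1 = phi * y ^ phi * (Real.log lam * Real.exp (-(y ^ phi)) + 1) := by
  have hy0 : y ≠ 0 := hy.ne'
  set L := Real.log lam with hL
  have hLne : L ≠ 0 := by
    rw [hL, Ne, Real.log_eq_zero]
    rintro (h | h | h) <;> [linarith; exact hlam1 h; linarith]
  have hlam1' : lam - 1 ≠ 0 := sub_ne_zero.mpr hlam1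
  set E0 : ℝ := Real.exp (-(y ^ phi)) with hE0
  set E : ℝ := Real.exp (L * E0 - y ^ phi) with hE
  -- derivative computation
  have hp : HasDerivAt (fun x : ℝ => x ^ phi) (phi * y ^ (phi - 1)) y :=
    Real.hasDerivAt_rpow_const (Or.inl hy0)
  have hq : HasDerivAt (fun x : ℝ => x ^ (phi - 1)) ((phi - 1) * y ^ (phi - 1 - 1)) y :=
    Real.hasDerivAt_rpow_const (Or.inl hy0)
  have he : HasDerivAt (fun x : ℝ => Real.exp (-(x ^ phi)))
      (E0 * (-(phi * y ^ (phi - 1)))) y := hp.neg.exp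
  have hu : HasDerivAt (fun x : ℝ => L * Real.exp (-(x ^ phi)) - x ^ phi)
      (L * (E0 * (-(phi * y ^ (phi - 1)))) - phi * y ^ (phi - 1)) y :=
    (he.const_mul L).sub hp
  have hExp : HasDerivAt (fun x : ℝ => Real.exp (L * Real.exp (-(x ^ phi)) - x ^ phi))
      (E * (L * (E0 * (-(phi * y ^ (phi - 1)))) - phi * y ^ (phi - 1))) y := hu.exp
  have hg : HasDerivAt (fun x : ℝ =>
      L * phi * (x ^ (phi - 1) * Real.exp (L * Real.exp (-(x ^ phi)) - x ^ phi)) / (lam - 1))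
      (L * phi * ((phi - 1) * y ^ (phi - 1 - 1) * E +
        y ^ (phi - 1) * (E * (L * (E0 * (-(phi * y ^ (phi - 1)))) - phi * y ^ (phi - 1)))) /
        (lam - 1)) y :=
    ((hq.mul hExp).const_mul (L * phi)).div_const (lam - 1)
  have hfun : smptwPDF lam phi = fun x =>
      L * phi * (x ^ (phi - 1) * Real.exp (L * Real.exp (-(x ^ phi)) - x ^ phi)) / (lam - 1) := by
    funext x
    simp only [smptwPDF, hL]
    ring
  rw [hfun, hg.deriv]
  -- key rpow identity
  have hkey : y ^ (phi - 1) * y ^ (phi - 1) = y ^ (phi - 1 - 1) * y ^ phi := by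
    rw [← Real.rpow_add hy, ← Real.rpow_add hy]
    ring_nf
  have hEpos : (0:ℝ) < E := Real.exp_pos _
  have hypos : (0:ℝ) < y ^ (phi - 1 - 1) := Real.rpow_pos_of_pos hy _
  have hD : L * phi * ((phi - 1) * y ^ (phi - 1 - 1) * E +
      y ^ (phi - 1) * (E * (L * (E0 * (-(phi * y ^ (phi - 1)))) - phi * y ^ (phi - 1)))) /
      (lam - 1)
      = (L * phi * E * y ^ (phi - 1 - 1) / (lam - 1)) *
        ((phi - 1) - phi * y ^ phi * (L * E0 + 1)) := by
    field_simp
    linear_combination (-(phi * (L * E0 + 1))) * hkey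
  rw [hD, mul_eq_zero]
  have hC : L * phi * E * y ^ (phi - 1 - 1) / (lam - 1) ≠ 0 := by
    apply div_ne_zero _ hlam1'
    positivity
  constructor
  · rintro (h | h)
    · exact absurd h hC
    · linarith
  · intro h
    right
    linarith
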